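/- Let A be a complex C*-algebra, β a *-automorphism of A, and (v_n) a sequence in A with ‖v_n‖ ≤ 1 for all n, such that for every a ∈ A one has ‖v_n* v_n a − a‖ → 0, ‖a v_n* v_n − a‖ → 0, and ‖v_n a v_n* − β(a)‖ → 0 as n → ∞. Then for every a ∈ A one has ‖v_n* a v_n − β⁻¹(a)‖ → 0 as n → ∞. -/
import Mathlib


open Filter Topology

theorem stmt_11 {A : Type*} [NonUnitalCStarAlgebra A]
    (β : A ≃⋆ₐ[ℂ] A) (v : ℕ → A) (hv : ∀ n, ‖v n‖ ≤ 1)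
    (h1 : ∀ a : A, Tendsto (fun n => ‖star (v n) * v n * a - a‖) atTop (𝓝 0))
    (h2 : ∀ a : A, Tendsto (fun n => ‖a * (star (v n) * v n) - a‖) atTop (𝓝 0))
    (h3 : ∀ a : A, Tendsto (fun n => ‖v n * a * star (v n) - β a‖) atTop (𝓝 0)) :
    ∀ a : A, Tendsto (fun n => ‖star (v n) * a * v n - β.symm a‖) atTop (𝓝 0) := by
  intro a
  set b := β.symm a with hb
  have hβb : β b = a := β.apply_symm_apply a
  have key : ∀ n, ‖star (v n) * a * v n - b‖ ≤
      ‖v n * b * star (v n) - β b‖ +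
        (‖b * (star (v n) * v n) - b‖ + ‖star (v n) * v n * b - b‖) := by
    intro n
    have hvn := hv n
    have hsn : ‖star (v n)‖ ≤ 1 := by simpa [norm_star] using hvn
    have hvv : ‖star (v n) * v n‖ ≤ 1 := by
      calc ‖star (v n) * v n‖ ≤ ‖star (v n)‖ * ‖v n‖ := norm_mul_le _ _
        _ ≤ 1 * 1 := by gcongr
        _ = 1 := by ring
    have e1 : star (v n) * a * v n - b =
        star (v n) * (a - v n * b * star (v n)) * v n +
        ((star (v n) * v n) * (b * (star (v n) * v n) - b) + (star (v n) * v n * b - b)) := by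
      noncomm_ring
    have A1 : ‖star (v n) * (a - v n * b * star (v n)) * v n‖ ≤
        ‖v n * b * star (v n) - β b‖ := by
      calc ‖star (v n) * (a - v n * b * star (v n)) * v n‖
          ≤ ‖star (v n) * (a - v n * b * star (v n))‖ * ‖v n‖ := norm_mul_le _ _
        _ ≤ ‖star (v n)‖ * ‖a - v n * b * star (v n)‖ * ‖v n‖ := by
            gcongr; exact norm_mul_le _ _
        _ ≤ 1 * ‖a - v n * b * star (v n)‖ * 1 := by gcongr
        _ = ‖v n * b * star (v n) - a‖ := by rw [one_mul, mul_one, norm_sub_rev]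
        _ = ‖v n * b * star (v n) - β b‖ := by rw [hβb]
    have A2 : ‖(star (v n) * v n) * (b * (star (v n) * v n) - b)‖ ≤
        ‖b * (star (v n) * v n) - b‖ := by
      calc ‖(star (v n) * v n) * (b * (star (v n) * v n) - b)‖
          ≤ ‖star (v n) * v n‖ * ‖b * (star (v n) * v n) - b‖ := norm_mul_le _ _
        _ ≤ 1 * ‖b * (star (v n) * v n) - b‖ := by gcongr
        _ = _ := one_mul _
    calc ‖star (v n) * a * v n - b‖
        = ‖star (v n) * (a - v n * b * star (v n)) * v n +
            ((star (v n) * v n) * (b * (star (v n) * v n) - b) +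
              (star (v n) * v n * b - b))‖ := by rw [e1]
      _ ≤ ‖star (v n) * (a - v n * b * star (v n)) * v n‖ +
            ‖(star (v n) * v n) * (b * (star (v n) * v n) - b) +
              (star (v n) * v n * b - b)‖ := norm_add_le _ _
      _ ≤ ‖star (v n) * (a - v n * b * star (v n)) * v n‖ +
            (‖(star (v n) * v n) * (b * (star (v n) * v n) - b)‖ +
              ‖star (v n) * v n * b - b‖) := by gcongr; exact norm_add_le _ _
      _ ≤ _ := by gcongr
  have hlim : Tendsto (fun n => ‖v n * b * star (v n) - β b‖ +
      (‖b * (star (v n) * v n) - b‖ + ‖star (v n) * v n * b - b‖)) atTop (𝓝 0) := by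
    simpa using (h3 b).add ((h2 b).add (h1 b))
  exact squeeze_zero (fun n => norm_nonneg _) key hlim
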